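/- Let ε > 0 and suppose that for every H-free tournament S on fewer than n vertices one has tr(S) ≥ |S|^ε. Let T be an H-free tournament on n vertices containing disjoint vertex sets A, B with d(A,B) = 1, |A| ≥ c·n and |B| ≥ c·n, where 0 < c < 1 and ε ≤ log_c(1/2). Then tr(T) ≥ n^ε. -/

import Mathlib

open Finset

structure Tournament (V : Type*) where
  adj : V → V → Prop
  irrefl : ∀ v, ¬ adj v v
  asymm : ∀ u v, adj u v → ¬ adj v u
  total : ∀ u v, u ≠ v → adj u v ∨ adj v u

namespace Tournament

variable {V : Type*} [Fintype V] [DecidableEq V]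

open Classical in
/-- number of directed edges from `X` to `Y` -/
noncomputable def e (T : Tournament V) (X Y : Finset V) : ℕ :=
  ((X ×ˢ Y).filter fun p => T.adj p.1 p.2).card

/-- directed density from `X` to `Y` -/
noncomputable def density (T : Tournament V) (X Y : Finset V) : ℝ :=
  (T.e X Y : ℝ) / ((X.card : ℝ) * (Y.card : ℝ))

/-- `S` induces a transitive subtournament -/
def IsTransSet (T : Tournament V) (S : Finset V) : Prop :=
  ∀ a ∈ S, ∀ b ∈ S, ∀ c ∈ S, T.adj a b → T.adj b c → T.adj a c

open Classical in
/-- size of the largest transitive subtournament -/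
noncomputable def tr (T : Tournament V) : ℕ :=
  Finset.sup ((Finset.univ : Finset (Finset V)).filter fun S => T.IsTransSet S) Finset.card

/-- `T` contains a copy of `H` -/
def HasCopy {W : Type*} (T : Tournament V) (H : Tournament W) : Prop :=
  ∃ f : W ↪ V, ∀ a b, H.adj a b → T.adj (f a) (f b)

end Tournament

namespace Tournament
variable {V : Type*} [Fintype V] [DecidableEq V]

omit [DecidableEq V] in
lemma card_le_tr (T : Tournament V) {S : Finset V} (hS : T.IsTransSet S) : S.card ≤ T.tr := by
  classical
  exact Finset.le_sup (by simp [hS])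

omit [DecidableEq V] in
lemma exists_tr (T : Tournament V) : ∃ S : Finset V, T.IsTransSet S ∧ S.card = T.tr := by
  classical
  obtain ⟨S, hS, h⟩ := Finset.exists_mem_eq_sup
    ((Finset.univ : Finset (Finset V)).filter fun S => T.IsTransSet S)
    ⟨∅, Finset.mem_filter.2 ⟨Finset.mem_univ _, by simp [IsTransSet]⟩⟩ Finset.card
  exact ⟨S, (Finset.mem_filter.1 hS).2, h.symm⟩

/-- There is a transitive subset of `A` whose size is at least the `tr` of some `H`-free
tournament on `Fin A.card`. -/
lemma exists_trans_subset {W : Type*} (H : Tournament W) {n : ℕ} (T : Tournament (Fin n))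
    (hfree : ¬ T.HasCopy H) (A : Finset (Fin n)) :
    ∃ S : Finset (Fin n), S ⊆ A ∧ T.IsTransSet S ∧
      ∃ TA : Tournament (Fin A.card), ¬ TA.HasCopy H ∧ TA.tr ≤ S.card := by
  classical
  set f : Fin A.card → Fin n := fun i => ((A.orderIsoOfFin rfl) i : Fin n) with hf
  have hfinj : Function.Injective f := fun i j h => (A.orderIsoOfFin rfl).injective
    (Subtype.coe_injective h)
  have hfmem : ∀ i, f i ∈ A := fun i => ((A.orderIsoOfFin rfl) i).2
  set TA : Tournament (Fin A.card) :=
    { adj := fun i j => T.adj (f i) (f j)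
      irrefl := fun i => T.irrefl _
      asymm := fun i j => T.asymm _ _
      total := fun i j h => T.total _ _ fun he => h (hfinj he) } with hTA
  obtain ⟨S', hS', hcard⟩ := TA.exists_tr
  refine ⟨S'.image f, ?_, ?_, TA, ?_, ?_⟩
  · intro x hx
    obtain ⟨i, _, rfl⟩ := Finset.mem_image.1 hx
    exact hfmem i
  · intro a ha b hb c hc hab hbc
    obtain ⟨i, hi, rfl⟩ := Finset.mem_image.1 ha
    obtain ⟨j, hj, rfl⟩ := Finset.mem_image.1 hb
    obtain ⟨k, hk, rfl⟩ := Finset.mem_image.1 hc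
    exact hS' i hi j hj k hk hab hbc
  · rintro ⟨g, hg⟩
    exact hfree ⟨⟨f ∘ g, hfinj.comp g.injective⟩, fun a b h => hg a b h⟩
  · rw [Finset.card_image_of_injective _ hfinj, hcard]

end Tournament

open Tournament in
theorem stmt_5 {W : Type*} (H : Tournament W) (n : ℕ) (T : Tournament (Fin n))
    (ε c : ℝ) (hε : 0 < ε) (hc0 : 0 < c) (hc1 : c < 1)
    (hεc : ε ≤ Real.logb c (1 / 2))
    (hind : ∀ m : ℕ, m < n → ∀ S : Tournament (Fin m),
      ¬ S.HasCopy H → (m : ℝ) ^ ε ≤ (S.tr : ℝ))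
    (hfree : ¬ T.HasCopy H)
    (A B : Finset (Fin n)) (hAB : Disjoint A B)
    (hdens : T.density A B = 1)
    (hA : c * (n : ℝ) ≤ (A.card : ℝ))
    (hB : c * (n : ℝ) ≤ (B.card : ℝ)) :
    (n : ℝ) ^ ε ≤ (T.tr : ℝ) := by
  classical
  rcases Nat.eq_zero_or_pos n with hn | hn
  · subst hn
    rw [Nat.cast_zero, Real.zero_rpow hε.ne']
    positivity
  have hn' : (0:ℝ) < n := by exact_mod_cast hn
  have hcn : (0:ℝ) < c * n := by positivity
  have hA0 : (0:ℝ) < A.card := lt_of_lt_of_le hcn hA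
  have hB0 : (0:ℝ) < B.card := lt_of_lt_of_le hcn hB
  have hAc : 0 < A.card := by exact_mod_cast hA0
  have hBc : 0 < B.card := by exact_mod_cast hB0
  -- A is complete to B
  have hcomp : ∀ a ∈ A, ∀ b ∈ B, T.adj a b := by
    have hne : (A.card : ℝ) * B.card ≠ 0 := by positivity
    have he : (T.e A B : ℝ) = (A.card : ℝ) * B.card := by
      rw [density, div_eq_one_iff_eq hne] at hdens
      exact hdens
    have he' : T.e A B = A.card * B.card := by exact_mod_cast he
    have hsub : ((A ×ˢ B).filter fun p => T.adj p.1 p.2) = A ×ˢ B := by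
      apply Finset.eq_of_subset_of_card_le (Finset.filter_subset _ _)
      rw [Finset.card_product]
      calc A.card * B.card = T.e A B := he'.symm
        _ ≤ _ := by
          unfold e
          exact le_of_eq (by congr)
    intro a ha b hb
    have : (a, b) ∈ (A ×ˢ B).filter fun p => T.adj p.1 p.2 := by
      rw [hsub]; exact Finset.mk_mem_product ha hb
    exact (Finset.mem_filter.1 this).2
  -- size bounds
  have hsumn : A.card + B.card ≤ n := by
    calc A.card + B.card = (A ∪ B).card := (Finset.card_union_of_disjoint hAB).symm
      _ ≤ Fintype.card (Fin n) := Finset.card_le_univ _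
      _ = n := Fintype.card_fin n
  have hAn : A.card < n := by omega
  have hBn : B.card < n := by omega
  -- transitive subsets of A and B
  obtain ⟨SA, hSAsub, hSAtrans, TA, hTAfree, hTAtr⟩ := exists_trans_subset H T hfree A
  obtain ⟨SB, hSBsub, hSBtrans, TB, hTBfree, hTBtr⟩ := exists_trans_subset H T hfree B
  have hSA : (A.card : ℝ) ^ ε ≤ SA.card := by
    calc (A.card : ℝ) ^ ε ≤ TA.tr := hind A.card hAn TA hTAfree
      _ ≤ SA.card := by exact_mod_cast hTAtr
  have hSB : (B.card : ℝ) ^ ε ≤ SB.card := by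
    calc (B.card : ℝ) ^ ε ≤ TB.tr := hind B.card hBn TB hTBfree
      _ ≤ SB.card := by exact_mod_cast hTBtr
  -- the union is transitive
  have memA : ∀ x ∈ SA ∪ SB, x ∈ A → x ∈ SA := fun x hx hxA =>
    (Finset.mem_union.1 hx).resolve_right fun h =>
      Finset.disjoint_left.1 hAB hxA (hSBsub h)
  have memB : ∀ x ∈ SA ∪ SB, x ∈ B → x ∈ SB := fun x hx hxB =>
    (Finset.mem_union.1 hx).resolve_left fun h =>
      Finset.disjoint_right.1 hAB hxB (hSAsub h)
  have memAB : ∀ x ∈ SA ∪ SB, x ∈ A ∨ x ∈ B := fun x hx =>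
    (Finset.mem_union.1 hx).imp (hSAsub ·) (hSBsub ·)
  have htrans : T.IsTransSet (SA ∪ SB) := by
    intro a ha b hb c hc hab hbc
    rcases memAB a ha with haA | haB
    · rcases memAB c hc with hcA | hcB
      · rcases memAB b hb with hbA | hbB
        · exact hSAtrans a (memA a ha haA) b (memA b hb hbA) c (memA c hc hcA) hab hbc
        · exact absurd hbc (T.asymm _ _ (hcomp c hcA b hbB))
      · exact hcomp a haA c hcB
    · rcases memAB b hb with hbA | hbB
      · exact absurd hab (T.asymm _ _ (hcomp b hbA a haB))
      · rcases memAB c hc with hcA | hcB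
        · exact absurd hbc (T.asymm _ _ (hcomp c hcA b hbB))
        · exact hSBtrans a (memB a ha haB) b (memB b hb hbB) c (memB c hc hcB) hab hbc
  have hdisj : Disjoint SA SB := hAB.mono hSAsub hSBsub
  have hsum : ((SA ∪ SB).card : ℝ) = SA.card + SB.card := by
    rw [Finset.card_union_of_disjoint hdisj]; push_cast; ring
  have htr : ((SA ∪ SB).card : ℝ) ≤ T.tr := by exact_mod_cast T.card_le_tr htrans
  -- arithmetic
  have hce : (1:ℝ)/2 ≤ c ^ ε := by
    have hlc : Real.log c < 0 := Real.log_neg hc0 hc1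
    rw [Real.logb] at hεc
    have h1 : Real.log (1/2) ≤ ε * Real.log c := (le_div_iff_of_neg hlc).1 hεc
    rw [Real.rpow_def_of_pos hc0]
    calc (1:ℝ)/2 = Real.exp (Real.log (1/2)) := (Real.exp_log (by norm_num)).symm
      _ ≤ Real.exp (Real.log c * ε) := Real.exp_le_exp.2 (by linarith [h1])
  have h1 : (c * n) ^ ε ≤ (A.card : ℝ) ^ ε := Real.rpow_le_rpow hcn.le hA hε.le
  have h2 : (c * n) ^ ε ≤ (B.card : ℝ) ^ ε := Real.rpow_le_rpow hcn.le hB hε.le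
  have hmul : (c * n : ℝ) ^ ε = c ^ ε * (n : ℝ) ^ ε :=
    Real.mul_rpow hc0.le (Nat.cast_nonneg n)
  have hN : (0:ℝ) ≤ (n:ℝ) ^ ε := Real.rpow_nonneg (Nat.cast_nonneg n) ε
  nlinarith [hSA, hSB, hsum, htr, h1, h2]
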